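/- Let p be a prime, F = F_{p^m}, θ(x) = x^{p^l}, n = gcd(l,m), k = m/n with k/2 an even integer (so 4 | k). Let γ be a generator of F*. Then there exists b ∈ F* with Im(f_{b,θ²}) ⊆ Im(f_{a,θ}) if and only if a lies in the subgroup generated by γ^{(p^{2n}+1)/gcd(2,p−1)}; and when such b exists, there are exactly p^{4n} − 1 of them. -/

import Mathlib

private lemma pow_sub_one_dvd_pow_sub_one (p a b : ℕ) (h : a ∣ b) :
    p ^ a - 1 ∣ p ^ b - 1 := by
  obtain ⟨c, rfl⟩ := h
  rw [pow_mul]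
  simpa using Nat.sub_dvd_pow_sub_pow (p ^ a) 1 c

private lemma gcd_pow_sub_one (p : ℕ) (hp : 2 ≤ p) :
    ∀ a b : ℕ, Nat.gcd (p ^ a - 1) (p ^ b - 1) = p ^ Nat.gcd a b - 1 := by
  intro a
  induction a using Nat.strong_induction_on with
  | _ a ih =>
    intro b
    rcases Nat.eq_zero_or_pos a with rfl | ha
    · simp
    · obtain ⟨c, hc⟩ : p ^ a - 1 ∣ (p ^ a) ^ (b / a) - 1 := by
        simpa using Nat.sub_dvd_pow_sub_pow (p ^ a) 1 (b / a)
      have h1 : p ^ (b % a) * (p ^ a) ^ (b / a) = p ^ b := by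
        rw [← pow_mul, ← pow_add, Nat.mod_add_div]
      have h2 : p ^ b - 1 = (p ^ (b % a) - 1) + (p ^ (b % a) * c) * (p ^ a - 1) := by
        have h3 : 1 ≤ p ^ (b % a) := Nat.one_le_pow _ _ (by omega)
        have h4 : 1 ≤ (p ^ a) ^ (b / a) := Nat.one_le_pow _ _ (by positivity)
        have h5 : 1 ≤ p ^ a := Nat.one_le_pow _ _ (by omega)
        have h7 : 1 ≤ p ^ b := Nat.one_le_pow _ _ (by omega)
        zify [h3, h4, h5, h7] at hc h1 ⊢
        nlinarith [hc, h1]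
      rw [h2, Nat.gcd_comm, Nat.gcd_add_mul_right_left,
        ih (b % a) (Nat.mod_lt _ ha) a, Nat.gcd_rec a b]

/-- basic consequences of the setup -/
private lemma setup_facts (l m n k : ℕ) (hl : 0 < l) (hm : 0 < m)
    (hn : n = Nat.gcd l m) (hk : k = m / n) (hk4 : 4 ∣ k) :
    0 < n ∧ m = n * k ∧ l = n * (l / n) ∧ Nat.Coprime (l / n) k ∧ Odd (l / n) ∧
      0 < k ∧ l * k = (l / n) * m ∧ (4 * n) ∣ m ∧
      Nat.gcd (2 * l) m = 2 * n ∧ Nat.gcd (4 * l) m = 4 * n := by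
  have hn0 : 0 < n := hn ▸ Nat.gcd_pos_of_pos_left m hl
  have hnl : n ∣ l := hn ▸ Nat.gcd_dvd_left l m
  have hnm : n ∣ m := hn ▸ Nat.gcd_dvd_right l m
  have hmk : m = n * k := by rw [hk, Nat.mul_div_cancel' hnm]
  have hln : l = n * (l / n) := (Nat.mul_div_cancel' hnl).symm
  have hco : Nat.Coprime (l / n) k := by
    have := Nat.coprime_div_gcd_div_gcd (m := l) (n := m) (hn ▸ hn0)
    rwa [← hn, ← hk] at this
  have hk0 : 0 < k := by
    rw [hk]; exact Nat.div_pos (Nat.le_of_dvd hm hnm) hn0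
  have h2k : 2 ∣ k := dvd_trans ⟨2, rfl⟩ hk4
  have hodd : Odd (l / n) := by
    rcases Nat.even_or_odd (l / n) with he | ho
    · exfalso
      have h2 : 2 ∣ Nat.gcd (l / n) k := Nat.dvd_gcd he.two_dvd h2k
      rw [hco] at h2; omega
    · exact ho
  have hlk : l * k = (l / n) * m := by
    calc l * k = (n * (l / n)) * k := by rw [← hln]
    _ = (l / n) * (n * k) := by ring
    _ = (l / n) * m := by rw [← hmk]
  have h4nm : (4 * n) ∣ m := by
    obtain ⟨k4, hk4'⟩ := hk4
    exact ⟨k4, by rw [hmk, hk4']; ring⟩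
  -- gcd (2l') k = 2 and gcd (4l') k = 4
  have key : ∀ c : ℕ, c ∣ k → c ∣ 4 → Nat.gcd (c * (l / n)) k = c := by
    intro c hck hc4
    have hd : Nat.gcd (c * (l / n)) k ∣ c := by
      have h1 : Nat.gcd (Nat.gcd (c * (l / n)) k) (l / n) ∣ Nat.gcd k (l / n) :=
        Nat.gcd_dvd_gcd_of_dvd_left _ (Nat.gcd_dvd_right _ _)
      rw [Nat.gcd_comm k] at h1
      rw [hco] at h1
      have h2 : Nat.Coprime (Nat.gcd (c * (l / n)) k) (l / n) := Nat.eq_one_of_dvd_one h1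
      exact (Nat.Coprime.dvd_of_dvd_mul_right h2) (Nat.gcd_dvd_left _ _)
    have hd2 : c ∣ Nat.gcd (c * (l / n)) k := Nat.dvd_gcd (Dvd.intro _ rfl) hck
    exact Nat.dvd_antisymm hd hd2
  have h2l : 2 * l = n * (2 * (l / n)) := by nth_rewrite 1 [hln]; ring
  have h4l : 4 * l = n * (4 * (l / n)) := by nth_rewrite 1 [hln]; ring
  have g2 : Nat.gcd (2 * l) m = 2 * n := by
    rw [h2l, hmk, Nat.gcd_mul_left, key 2 h2k (by norm_num), Nat.mul_comm]
  have g4 : Nat.gcd (4 * l) m = 4 * n := by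
    rw [h4l, hmk, Nat.gcd_mul_left, key 4 hk4 dvd_rfl, Nat.mul_comm]
  exact ⟨hn0, hmk, hln, hco, hodd, hk0, hlk, h4nm, g2, g4⟩

private lemma sq_sub_one (P : ℕ) (hP : 1 ≤ P) : (P + 1) * (P - 1) = P ^ 2 - 1 := by
  have : 1 ≤ P ^ 2 := Nat.one_le_pow _ _ hP
  zify [hP, this]; ring

private lemma gcd_pow_add_one (p n l l' : ℕ) (hp : 2 ≤ p) (hn0 : 0 < n)
    (hl : l = n * l') (hodd : Odd l') :
    Nat.gcd (p ^ (2 * n) + 1) (p ^ l + 1) = Nat.gcd 2 (p - 1) := by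
  set d := Nat.gcd (p ^ (2 * n) + 1) (p ^ l + 1) with hd
  have hl0 : 0 < l := by
    rcases hodd with ⟨t, ht⟩
    have : 0 < l' := by omega
    subst hl; exact Nat.mul_pos hn0 this
  have hP1 : 1 ≤ p ^ (2 * n) := Nat.one_le_pow _ _ (by omega)
  have hQ1 : 1 ≤ p ^ (2 * l) := Nat.one_le_pow _ _ (by omega)
  have e1 : (p ^ (2 * n) + 1) * (p ^ (2 * n) - 1) = p ^ (4 * n) - 1 := by
    rw [sq_sub_one _ hP1, ← pow_mul, show 2 * n * 2 = 4 * n from by ring]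
  have e2 : (p ^ l + 1) * (p ^ l - 1) = p ^ (2 * l) - 1 := by
    rw [sq_sub_one _ (Nat.one_le_pow _ _ (by omega)), ← pow_mul,
      show l * 2 = 2 * l from by ring]
  have h1 : d ∣ p ^ (4 * n) - 1 :=
    e1 ▸ Dvd.dvd.mul_right (Nat.gcd_dvd_left _ _) _
  have h2 : d ∣ p ^ (2 * l) - 1 :=
    e2 ▸ Dvd.dvd.mul_right (Nat.gcd_dvd_right _ _) _
  have hg : Nat.gcd (4 * n) (2 * l) = 2 * n := by
    have : 4 * n = (2 * n) * 2 := by ring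
    have h2l : 2 * l = (2 * n) * l' := by rw [hl]; ring
    rw [this, h2l, Nat.gcd_mul_left]
    have : Nat.gcd 2 l' = 1 := Nat.coprime_two_left.mpr hodd
    rw [this, Nat.mul_one]
  have h3 : d ∣ p ^ (2 * n) - 1 := by
    have := Nat.dvd_gcd h1 h2
    rwa [gcd_pow_sub_one p hp, hg] at this
  have h4 : d ∣ 2 := by
    have := Nat.dvd_sub (Nat.gcd_dvd_left (p ^ (2 * n) + 1) (p ^ l + 1)) h3
    have heq : (p ^ (2 * n) + 1) - (p ^ (2 * n) - 1) = 2 := by omega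
    rwa [heq] at this
  have hdpos : 0 < d := Nat.gcd_pos_of_pos_left _ (by positivity)
  have hdle : d ≤ 2 := Nat.le_of_dvd (by norm_num) h4
  rcases Nat.even_or_odd p with hpe | hpo
  · -- p even : both sides are 1
    have hodd1 : Odd (p ^ l + 1) := by
      have : Even (p ^ l) := Nat.even_pow.mpr ⟨hpe, by omega⟩
      rcases this with ⟨s, hs⟩; exact ⟨s, by omega⟩
    have hd1 : ¬ (2 ∣ d) := by
      intro h2d
      have := dvd_trans h2d (Nat.gcd_dvd_right (p ^ (2 * n) + 1) (p ^ l + 1))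
      rcases hodd1 with ⟨s, hs⟩
      rcases this with ⟨c, hc⟩; omega
    have hd' : d = 1 := by omega
    have hpodd : Odd (p - 1) := by rcases hpe with ⟨t, ht⟩; exact ⟨t - 1, by omega⟩
    have : Nat.gcd 2 (p - 1) = 1 := Nat.coprime_two_left.mpr hpodd
    omega
  · -- p odd : both sides are 2
    have hx : ∀ x : ℕ, Even (p ^ x + 1) := by
      intro x
      rcases hpo.pow (n := x) with ⟨s, hs⟩
      exact ⟨s + 1, by omega⟩
    have h2d : 2 ∣ d := Nat.dvd_gcd (hx _).two_dvd (hx _).two_dvd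
    have hd2 : d = 2 := by omega
    have : Nat.gcd 2 (p - 1) = 2 := by
      have : 2 ∣ p - 1 := by rcases hpo with ⟨t, ht⟩; omega
      exact Nat.gcd_eq_left this
    omega

/-- The key arithmetic equivalence: `p^{4n}-1 ∣ j·(p^l+1)(p^{2l}-1)  ↔  D ∣ j`
where `D = (p^{2n}+1)/gcd(2,p-1)`. -/
private lemma key_dvd_iff (p l n l' : ℕ) (hp : 2 ≤ p) (hn0 : 0 < n)
    (hl : l = n * l') (hodd : Odd l') (j : ℤ) :
    (((p ^ (4 * n) - 1 : ℕ)) : ℤ) ∣ j * (((p ^ l + 1) * (p ^ (2 * l) - 1) : ℕ) : ℤ) ↔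
      (((p ^ (2 * n) + 1) / Nat.gcd 2 (p - 1) : ℕ) : ℤ) ∣ j := by
  have hl'1 : 1 ≤ l' := by rcases hodd with ⟨t2, ht2⟩; omega
  have hl0 : 0 < l := hl ▸ Nat.mul_pos hn0 (by omega)
  set t := p ^ (2 * n) - 1 with hts
  set g0 := p ^ (2 * n) + 1 with hg0
  set e := Nat.gcd 2 (p - 1) with he
  have hP1 : 1 ≤ p ^ (2 * n) := Nat.one_le_pow _ _ (by omega)
  have ht0 : 0 < t := by
    have : 2 ≤ p ^ (2 * n) := by
      calc 2 ≤ p := hp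
      _ = p ^ 1 := (pow_one p).symm
      _ ≤ p ^ (2 * n) := Nat.pow_le_pow_right (by omega) (by omega)
    omega
  have hsq : p ^ (4 * n) = p ^ (2 * n) * p ^ (2 * n) := by
    rw [← pow_add]; congr 1; ring
  have hsq' : ((p : ℤ)) ^ (4 * n) = (p : ℤ) ^ (2 * n) * (p : ℤ) ^ (2 * n) := by
    exact_mod_cast congrArg (Nat.cast (R := ℤ)) hsq
  have hg4 : p ^ (4 * n) - 1 = t * g0 := by
    have h4 : 1 ≤ p ^ (4 * n) := Nat.one_le_pow _ _ (by omega)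
    rw [hts, hg0]
    zify [hP1, h4]
    linear_combination hsq'
  -- Q - 1 = t * s with s the geometric sum
  set s := ∑ i ∈ Finset.range l', (p ^ (2 * n)) ^ i with hs
  have hpow : (p ^ (2 * n)) ^ l' = p ^ (2 * l) := by
    rw [← pow_mul, hl]; ring_nf
  have hpow' : ((p : ℤ) ^ (2 * n)) ^ l' = (p : ℤ) ^ (2 * l) := by
    exact_mod_cast congrArg (Nat.cast (R := ℤ)) hpow
  have hQts : p ^ (2 * l) - 1 = t * s := by
    have hgeom := geom_sum_mul ((p : ℤ) ^ (2 * n)) l'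
    have h1 : 1 ≤ p ^ (2 * l) := Nat.one_le_pow _ _ (by omega)
    rw [hts]
    zify [h1, hP1]
    rw [← hpow']
    have hscast : ((s : ℕ) : ℤ) = ∑ i ∈ Finset.range l', ((p : ℤ) ^ (2 * n)) ^ i := by
      rw [hs]; push_cast; rfl
    rw [hscast]
    linear_combination -hgeom
  -- g0 coprime to s
  have hs0 : 1 ≤ s := by
    have h00 : (p ^ (2 * n)) ^ 0 ≤ s :=
      Finset.single_le_sum (f := fun i => (p ^ (2 * n)) ^ i)
        (fun i _ => by positivity) (Finset.mem_range.mpr (by omega))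
    simpa using h00
  have hcop : Nat.Coprime g0 s := by
    have hP : (p : ZMod g0) ^ (2 * n) = -1 := by
      have h0 : ((g0 : ℕ) : ZMod g0) = 0 := ZMod.natCast_self g0
      rw [hg0] at h0
      push_cast at h0
      linear_combination h0
    have hs1 : ((s : ℕ) : ZMod g0) = 1 := by
      rw [hs]
      push_cast
      rw [hP, neg_one_geom_sum, if_neg (by simp [Nat.even_iff, Nat.odd_iff.mp hodd])]
    have hmod : s ≡ 1 [MOD g0] := (ZMod.natCast_eq_natCast_iff s 1 g0).mp (by simpa using hs1)
    have hdvd : g0 ∣ s - 1 := (Nat.modEq_iff_dvd' hs0).mp hmod.symm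
    have h1 : Nat.gcd g0 s ∣ s - 1 := (Nat.gcd_dvd_left _ _).trans hdvd
    have h2 : Nat.gcd g0 s ∣ s := Nat.gcd_dvd_right _ _
    have h3 : Nat.gcd g0 s ∣ 1 := by
      have h4 := Nat.dvd_sub h2 h1
      rwa [show s - (s - 1) = 1 from by omega] at h4
    exact Nat.eq_one_of_dvd_one h3
  -- gcd g0 (p^l+1) = e
  have hge : Nat.gcd g0 (p ^ l + 1) = e := gcd_pow_add_one p n l l' hp hn0 hl hodd
  have he0 : 0 < e := Nat.gcd_pos_of_pos_left _ (by omega)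
  have heg : e ∣ g0 := hge ▸ Nat.gcd_dvd_left g0 (p ^ l + 1)
  have heq' : e ∣ p ^ l + 1 := hge ▸ Nat.gcd_dvd_right g0 (p ^ l + 1)
  set D := g0 / e with hD
  set u := (p ^ l + 1) / e with hu
  have hDg : g0 = D * e := (Nat.div_mul_cancel heg).symm
  have heu : p ^ l + 1 = u * e := (Nat.div_mul_cancel heq').symm
  have hcoDu : Nat.Coprime D u := by
    have hc := Nat.coprime_div_gcd_div_gcd (m := g0) (n := p ^ l + 1) (hge ▸ he0)
    rwa [hge] at hc
  have ht' : (t : ℤ) ≠ 0 := by exact_mod_cast ht0.ne'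
  have he' : (e : ℤ) ≠ 0 := by exact_mod_cast he0.ne'
  have hcs : IsCoprime ((g0 : ℕ) : ℤ) ((s : ℕ) : ℤ) := Nat.isCoprime_iff_coprime.mpr hcop
  have hcu : IsCoprime ((D : ℕ) : ℤ) ((u : ℕ) : ℤ) := Nat.isCoprime_iff_coprime.mpr hcoDu
  have hcast : ((g0 : ℕ) : ℤ) = (D : ℤ) * (e : ℤ) := by exact_mod_cast congrArg (Nat.cast (R := ℤ)) hDg
  rw [hg4, show (p ^ l + 1) * (p ^ (2 * l) - 1) = (u * e) * (t * s) from by rw [heu, hQts]]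
  simp only [Nat.cast_mul]
  constructor
  · intro h
    have h2 : (g0 : ℤ) ∣ j * ((u : ℤ) * e) * s := by
      have hh : j * ((u : ℤ) * e * ((t : ℤ) * s)) = (t : ℤ) * (j * ((u : ℤ) * e) * s) := by ring
      rw [hh] at h
      exact (mul_dvd_mul_iff_left ht').mp h
    have h3 : (g0 : ℤ) ∣ j * ((u : ℤ) * e) := hcs.dvd_of_dvd_mul_right h2
    have h4 : ((D : ℤ) * e) ∣ (j * u) * e := by
      rw [← hcast, show (j * (u : ℤ)) * e = j * ((u : ℤ) * e) from by ring]
      exact h3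
    have h5 : (D : ℤ) ∣ j * u := (mul_dvd_mul_iff_right he').mp h4
    exact hcu.dvd_of_dvd_mul_right h5
  · intro h
    obtain ⟨w, hw⟩ := h
    exact ⟨w * ((u : ℤ) * s), by rw [hw]; linear_combination (-(t : ℤ) * w * u * s) * hcast⟩

private lemma charP_of_card {F : Type} [Field F] [Fintype F] (p m : ℕ) (hp : p.Prime)
    (hm : 0 < m) (hF : Fintype.card F = p ^ m) : CharP F p := by
  obtain ⟨n', hr, hc⟩ := FiniteField.card F (ringChar F)
  have hdvd : ringChar F ∣ p ^ m := by
    rw [← hF, hc]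
    exact dvd_pow_self _ (by exact_mod_cast n'.pos.ne')
  have : ringChar F = p :=
    (Nat.prime_dvd_prime_iff_eq hr hp).mp (hr.dvd_of_dvd_pow hdvd)
  exact ringChar.of_eq this

section FieldPart

variable {F : Type} [Field F] [Fintype F] (p m l k : ℕ) [hpf : Fact p.Prime] [CharP F p]

private lemma pow_card_eq (hF : Fintype.card F = p ^ m) (x : F) : x ^ p ^ m = x := by
  rw [← hF]; exact FiniteField.pow_card x

private lemma pow_card_mul (hF : Fintype.card F = p ^ m) (c : ℕ) (x : F) :
    x ^ p ^ (c * m) = x := by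
  induction c with
  | zero => simp
  | succ c ih =>
    have : p ^ ((c + 1) * m) = p ^ (c * m) * p ^ m := by rw [← pow_add]; ring_nf
    rw [this, pow_mul, ih, pow_card_eq p m hF]

private lemma pow_card_mod (hF : Fintype.card F = p ^ m) (s : ℕ) (x : F) :
    x ^ p ^ s = x ^ p ^ (s % m) := by
  have h : s = m * (s / m) + s % m := (Nat.div_add_mod s m).symm
  calc x ^ p ^ s = x ^ (p ^ (m * (s / m)) * p ^ (s % m)) := by rw [← pow_add, ← h]
  _ = (x ^ p ^ ((s / m) * m)) ^ p ^ (s % m) := by rw [pow_mul, Nat.mul_comm m]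
  _ = x ^ p ^ (s % m) := by rw [pow_card_mul p m hF]

/-- the "trace" of `θ = x ↦ x^{p^l}` -/
private def trF (F : Type) [Field F] (p l k : ℕ) (x : F) : F :=
  ∑ i ∈ Finset.range k, x ^ p ^ (l * i)

private lemma trF_sub (x y : F) : trF F p l k (x - y) = trF F p l k x - trF F p l k y := by
  unfold trF
  rw [← Finset.sum_sub_distrib]
  exact Finset.sum_congr rfl fun i _ => sub_pow_char_pow x y (l * i)

private lemma trF_theta (hF : Fintype.card F = p ^ m) (l' : ℕ) (hlk : l * k = l' * m)
    (x : F) : trF F p l k (x ^ p ^ l) = trF F p l k x := by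
  unfold trF
  have h1 : ∀ i : ℕ, (x ^ p ^ l) ^ p ^ (l * i) = x ^ p ^ (l * (i + 1)) := by
    intro i
    rw [← pow_mul, ← pow_add]
    congr 2
    ring
  rw [Finset.sum_congr rfl fun i _ => h1 i]
  have h2 : ∑ i ∈ Finset.range k, x ^ p ^ (l * (i + 1))
      = (∑ i ∈ Finset.range (k + 1), x ^ p ^ (l * i)) - x ^ p ^ (l * 0) := by
    rw [Finset.sum_range_succ' (fun i => x ^ p ^ (l * i)) k]
    ring
  rw [h2, Finset.sum_range_succ]
  have h3 : x ^ p ^ (l * k) = x := by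
    rw [hlk]; exact pow_card_mul p m hF l' x
  rw [h3]
  simp

private lemma trF_ne_zero (hF : Fintype.card F = p ^ m) (hm : 0 < m) (hp2 : 2 ≤ p)
    (hk0 : 0 < k)
    (hdist : ∀ i < k, ∀ j < k, (l * i) % m = (l * j) % m → i = j)
    (h : ∀ x : F, trF F p l k x = 0) : False := by
  classical
  set P : Polynomial F := ∑ i ∈ Finset.range k, Polynomial.X ^ (p ^ (l * i % m)) with hP
  have heval : ∀ x : F, P.eval x = 0 := by
    intro x
    rw [hP]
    rw [Polynomial.eval_finset_sum]
    have : ∀ i ∈ Finset.range k, Polynomial.eval x (Polynomial.X ^ p ^ (l * i % m)) = x ^ p ^ (l * i) := by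
      intro i _
      rw [Polynomial.eval_pow, Polynomial.eval_X, ← pow_card_mod p m hF]
    rw [Finset.sum_congr rfl this]
    exact h x
  have hco : P.coeff 1 = 1 := by
    rw [hP, Polynomial.finset_sum_coeff]
    have h1 : ∀ i ∈ Finset.range k, (Polynomial.X ^ (p ^ (l * i % m)) : Polynomial F).coeff 1
        = if i = 0 then 1 else 0 := by
      intro i hi
      rw [Polynomial.coeff_X_pow]
      by_cases h0 : i = 0
      · subst h0; simp
      · rw [if_neg h0, if_neg]
        intro hcon
        have hexp : l * i % m = 0 := by
          by_contra hne
          have := Nat.one_lt_pow hne (show 1 < p by omega)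
          omega
        have := hdist i (Finset.mem_range.mp hi) 0 hk0 (by simpa using hexp)
        exact h0 this
    rw [Finset.sum_congr rfl h1, Finset.sum_ite_eq' (Finset.range k) 0 (fun _ => (1:F))]
    simp [hk0]
  have hdeg : P.natDegree < Fintype.card F := by
    have hb : ∀ i ∈ Finset.range k, (Polynomial.X ^ (p ^ (l * i % m)) : Polynomial F).natDegree ≤ p ^ (m - 1) := by
      intro i _
      rw [Polynomial.natDegree_X_pow]
      have hmod : l * i % m < m := Nat.mod_lt _ hm
      exact Nat.pow_le_pow_right (by omega) (by omega)
    have := Polynomial.natDegree_sum_le_of_forall_le (Finset.range k) _ hb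
    rw [← hP] at this
    have hlt : p ^ (m - 1) < p ^ m := Nat.pow_lt_pow_right (by omega) (by omega)
    rw [hF]
    omega
  have : P = 0 :=
    Polynomial.eq_zero_of_natDegree_lt_card_of_eval_eq_zero P
      (f := (id : F → F)) Function.injective_id (fun x => heval x) hdeg
  rw [this] at hco
  simp at hco

/-- Core equivalence: `c·Im(θ²−1) ⊆ Im(θ−1)` iff `c^{p^{2l}} = c`. -/
private lemma core_iff (hF : Fintype.card F = p ^ m) (hm : 0 < m) (hp2 : 2 ≤ p)
    (hk0 : 0 < k) (l' : ℕ) (hlk : l * k = l' * m)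
    (hdist : ∀ i < k, ∀ j < k, (l * i) % m = (l * j) % m → i = j)
    (c : F) :
    (∀ z : F, ∃ v : F, v ^ p ^ l - v = c * (z ^ p ^ (2 * l) - z)) ↔
      c ^ p ^ (2 * l) = c := by
  have hQ : ∀ y : F, (y ^ p ^ l) ^ p ^ l = y ^ p ^ (2 * l) := by
    intro y
    rw [← pow_mul, ← pow_add, show l + l = 2 * l from by ring]
  constructor
  · intro h
    have hTr : ∀ z : F, trF F p l k (c * z ^ p ^ (2 * l)) = trF F p l k (c * z) := by
      intro z
      obtain ⟨v, hv⟩ := h z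
      have h1 : c * z ^ p ^ (2 * l) - c * z = v ^ p ^ l - v := by
        rw [hv]; ring
      have h2 := congrArg (trF F p l k) h1
      rw [trF_sub, trF_sub, trF_theta p m l k hF l' hlk] at h2
      exact sub_eq_zero.mp (by rw [h2]; ring)
    set c' := c ^ p ^ (2 * l * (k - 1)) with hc'
    have hc'Q : c' ^ p ^ (2 * l) = c := by
      rw [hc', ← pow_mul, ← pow_add,
        show 2 * l * (k - 1) + 2 * l = 2 * l * k from by
          rw [← Nat.mul_succ]; congr 1; omega,
        show 2 * l * k = (2 * l') * m from by rw [mul_assoc, hlk]; ring]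
      exact pow_card_mul p m hF (2 * l') c
    have hTr' : ∀ z : F, trF F p l k (c' * z) = trF F p l k (c * z) := by
      intro z
      have e1 : c * z ^ p ^ (2 * l) = (c' * z) ^ p ^ (2 * l) := by
        rw [mul_pow, hc'Q]
      have e2 : trF F p l k ((c' * z) ^ p ^ (2 * l)) = trF F p l k (c' * z) := by
        rw [← hQ (c' * z), trF_theta p m l k hF l' hlk, trF_theta p m l k hF l' hlk]
      rw [← e2, ← e1, hTr z]
    by_cases hcc : c' = c
    · rw [← hcc, hc'Q]; exact hcc.symm
    · exfalso
      have hd : ∀ y : F, trF F p l k y = 0 := by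
        intro y
        have hzero : ∀ z, trF F p l k ((c' - c) * z) = 0 := by
          intro z
          have h3 := hTr' z
          rw [sub_mul, trF_sub, h3]; ring
        have hne : c' - c ≠ 0 := sub_ne_zero.mpr hcc
        have h4 := hzero ((c' - c)⁻¹ * y)
        rwa [← mul_assoc, mul_inv_cancel₀ hne, one_mul] at h4
      exact trF_ne_zero p m l k hF hm hp2 hk0 hdist hd
  · intro hc z
    refine ⟨(c * z) ^ p ^ l + c * z, ?_⟩
    have hadd : ((c * z) ^ p ^ l + c * z) ^ p ^ l
        = ((c * z) ^ p ^ l) ^ p ^ l + (c * z) ^ p ^ l :=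
      add_pow_char_pow _ _ p l
    rw [hadd, hQ (c * z)]
    have : (c * z) ^ p ^ (2 * l) = c * z ^ p ^ (2 * l) := by
      rw [mul_pow, hc]
    rw [this]
    ring

private lemma range_eq (a : F) (ha : a ≠ 0) (e : ℕ) :
    Set.range (fun x : F => a * x ^ p ^ e - x * a ^ p ^ e)
      = Set.range (fun z : F => a ^ (p ^ e + 1) * (z ^ p ^ e - z)) := by
  ext y
  simp only [Set.mem_range]
  constructor
  · rintro ⟨x, rfl⟩
    refine ⟨x / a, ?_⟩
    have hpe : a ^ p ^ e * a⁻¹ ^ p ^ e = 1 := by rw [← mul_pow, mul_inv_cancel₀ ha, one_pow]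
    field_simp
    linear_combination (a ^ 2 * x ^ p ^ e) * hpe
  · rintro ⟨z, rfl⟩
    refine ⟨a * z, ?_⟩
    rw [mul_pow]
    ring

/-- inclusion of images iff the `c`-condition -/
private lemma incl_iff (hF : Fintype.card F = p ^ m) (hm : 0 < m) (hp2 : 2 ≤ p)
    (hk0 : 0 < k) (l' : ℕ) (hlk : l * k = l' * m)
    (hdist : ∀ i < k, ∀ j < k, (l * i) % m = (l * j) % m → i = j)
    (a b : F) (ha : a ≠ 0) (hb : b ≠ 0) :
    (Set.range (fun x : F => b * x ^ p ^ (2 * l) - x * b ^ p ^ (2 * l)) ⊆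
        Set.range (fun x : F => a * x ^ p ^ l - x * a ^ p ^ l)) ↔
      (b ^ (p ^ (2 * l) + 1) / a ^ (p ^ l + 1)) ^ p ^ (2 * l)
        = b ^ (p ^ (2 * l) + 1) / a ^ (p ^ l + 1) := by
  have hA : a ^ (p ^ l + 1) ≠ 0 := pow_ne_zero _ ha
  rw [range_eq p a ha l, range_eq p b hb (2 * l)]
  rw [← core_iff p m l k hF hm hp2 hk0 l' hlk hdist]
  rw [Set.range_subset_iff]
  constructor
  · intro h z
    obtain ⟨v, hv⟩ := h z
    refine ⟨v, ?_⟩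
    have := congrArg (fun w => w / a ^ (p ^ l + 1)) hv
    simp only at this
    rw [mul_div_assoc] at this
    rw [mul_comm (b ^ (p ^ (2*l) + 1)) _] at this
    field_simp at this ⊢
    linear_combination this
  · intro h z
    obtain ⟨v, hv⟩ := h z
    refine ⟨v, ?_⟩
    field_simp at hv ⊢
    linear_combination hv

section GroupPart

variable {G : Type} [CommGroup G] [Finite G]

private lemma exists_pow_eq (γ : G) (hγ : ∀ u : G, u ∈ Subgroup.zpowers γ)
    (N : ℕ) (hN : orderOf γ = N) (E : ℕ) (y : G) (j : ℤ) (hy : γ ^ j = y) :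
    (∃ u : G, u ^ E = y) ↔ ((Nat.gcd E N : ℤ)) ∣ j := by
  constructor
  · rintro ⟨u, hu⟩
    obtain ⟨s, hs⟩ := Subgroup.mem_zpowers_iff.mp (hγ u)
    have h1 : γ ^ (s * (E : ℤ)) = y := by
      rw [zpow_mul, hs, zpow_natCast, hu]
    have h2 : γ ^ (s * (E : ℤ) - j) = 1 := by
      rw [zpow_sub, h1, hy, mul_inv_cancel]
    have h3 : ((N : ℤ)) ∣ s * (E : ℤ) - j := by
      rw [← hN]
      exact orderOf_dvd_iff_zpow_eq_one.mpr h2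
    have h4 : ((Nat.gcd E N : ℕ) : ℤ) ∣ s * (E : ℤ) :=
      Dvd.dvd.mul_left (Int.natCast_dvd_natCast.mpr (Nat.gcd_dvd_left E N)) s
    have h5 : ((Nat.gcd E N : ℕ) : ℤ) ∣ s * (E : ℤ) - j :=
      (Int.natCast_dvd_natCast.mpr (Nat.gcd_dvd_right E N)).trans h3
    have := dvd_sub h4 h5
    simpa using this
  · intro hj
    have hb := Int.gcd_eq_gcd_ab (E : ℤ) (N : ℤ)
    rw [Int.gcd_natCast_natCast] at hb
    obtain ⟨w, hw⟩ := hj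
    refine ⟨γ ^ (Int.gcdA (E : ℤ) (N : ℤ) * w), ?_⟩
    have hN1 : γ ^ ((N : ℤ)) = 1 := by
      rw [zpow_natCast, ← hN]
      exact pow_orderOf_eq_one γ
    have key : Int.gcdA (E : ℤ) (N : ℤ) * w * (E : ℤ)
        = j + (N : ℤ) * (-(Int.gcdB (E : ℤ) (N : ℤ)) * w) := by
      rw [hw]
      linear_combination (-w) * hb
    calc (γ ^ (Int.gcdA (E : ℤ) (N : ℤ) * w)) ^ E
        = γ ^ (Int.gcdA (E : ℤ) (N : ℤ) * w * (E : ℤ)) := by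
          rw [← zpow_natCast (γ ^ _) E, ← zpow_mul]
      _ = γ ^ j * (γ ^ ((N : ℤ))) ^ (-(Int.gcdB (E : ℤ) (N : ℤ)) * w) := by
          rw [key, zpow_add, ← zpow_mul]
      _ = y := by rw [hN1, hy]; simp

private lemma card_solutions (γ : G) (hγ : ∀ u : G, u ∈ Subgroup.zpowers γ)
    (N : ℕ) (hN : orderOf γ = N) (hcard : Nat.card G = N) (hN0 : 0 < N)
    (E : ℕ) (y : G) (hex : ∃ u : G, u ^ E = y) :
    Nat.card {u : G // u ^ E = y} = Nat.gcd E N := by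
  obtain ⟨u₀, hu₀⟩ := hex
  set d := Nat.gcd E N with hd
  have hdN : d ∣ N := Nat.gcd_dvd_right E N
  have hd0 : 0 < d := Nat.gcd_pos_of_pos_right _ hN0
  have e1 : {u : G // u ^ E = y} ≃ {u : G // u ^ E = 1} :=
    { toFun := fun u => ⟨u.1 * u₀⁻¹, by
        rw [mul_pow, u.2, inv_pow, hu₀, mul_inv_cancel]⟩
      invFun := fun u => ⟨u.1 * u₀, by
        rw [mul_pow, u.2, hu₀, one_mul]⟩
      left_inv := fun u => by
        ext; simp [mul_assoc]
      right_inv := fun u => by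
        ext; simp [mul_assoc] }
  have h2 : ∀ u : G, u ^ E = 1 ↔ u ^ d = 1 := by
    intro u
    rw [← orderOf_dvd_iff_pow_eq_one, ← orderOf_dvd_iff_pow_eq_one]
    constructor
    · intro h
      exact Nat.dvd_gcd h (hcard ▸ orderOf_dvd_natCard u)
    · intro h
      exact h.trans (Nat.gcd_dvd_left E N)
  have h3 : ∀ u : G, u ^ d = 1 ↔ u ∈ Subgroup.zpowers (γ ^ (N / d)) := by
    intro u
    constructor
    · intro h
      obtain ⟨s, hs⟩ := Subgroup.mem_zpowers_iff.mp (hγ u)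
      have h4 : ((N : ℤ)) ∣ s * (d : ℤ) := by
        rw [← hN]
        refine orderOf_dvd_iff_zpow_eq_one.mpr ?_
        rw [zpow_mul, hs, zpow_natCast, h]
      have hNd : (N : ℤ) = ((N / d : ℕ) : ℤ) * (d : ℤ) := by
        exact_mod_cast (Nat.div_mul_cancel hdN).symm
      rw [hNd] at h4
      have h5 : ((N / d : ℕ) : ℤ) ∣ s :=
        (mul_dvd_mul_iff_right (show (d : ℤ) ≠ 0 by exact_mod_cast hd0.ne')).mp
          (by rwa [mul_comm s] at h4 ⊢ <;> exact h4)
      obtain ⟨w, hw⟩ := h5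
      refine Subgroup.mem_zpowers_iff.mpr ⟨w, ?_⟩
      rw [← zpow_natCast γ (N / d), ← zpow_mul, ← hw, hs]
    · intro h
      obtain ⟨s, hs⟩ := Subgroup.mem_zpowers_iff.mp h
      rw [← hs, ← zpow_natCast γ (N / d), ← zpow_mul, ← zpow_natCast _ d, ← zpow_mul]
      have : ((N / d : ℕ) : ℤ) * s * (d : ℤ) = (N : ℤ) * s := by
        have hNd : ((N / d : ℕ) : ℤ) * (d : ℤ) = (N : ℤ) := by
          exact_mod_cast Nat.div_mul_cancel hdN
        linear_combination s * hNd
      rw [this, zpow_mul, zpow_natCast, ← hN, pow_orderOf_eq_one, one_zpow]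
  have e2 : {u : G // u ^ E = 1} ≃ {u : G // u ^ d = 1} :=
    Equiv.subtypeEquivRight h2
  have e3 : {u : G // u ^ d = 1} ≃ Subgroup.zpowers (γ ^ (N / d)) :=
    Equiv.subtypeEquivRight h3
  rw [Nat.card_congr ((e1.trans e2).trans e3), Nat.card_zpowers, orderOf_pow, hN,
    Nat.gcd_eq_right (Nat.div_dvd_of_dvd hdN), Nat.div_div_self hdN hN0.ne']

private lemma mem_zpowers_pow_iff' (γ : G) (N : ℕ) (hN : orderOf γ = N)
    (D : ℕ) (hD : D ∣ N) (y : G) (j : ℤ) (hy : γ ^ j = y) :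
    y ∈ Subgroup.zpowers (γ ^ D) ↔ (D : ℤ) ∣ j := by
  constructor
  · intro h
    obtain ⟨s, hs⟩ := Subgroup.mem_zpowers_iff.mp h
    have h1 : γ ^ ((D : ℤ) * s - j) = 1 := by
      rw [zpow_sub, zpow_mul, zpow_natCast, hs, hy, mul_inv_cancel]
    have h2 : (N : ℤ) ∣ (D : ℤ) * s - j := hN ▸ orderOf_dvd_iff_zpow_eq_one.mpr h1
    have h3 : (D : ℤ) ∣ (D : ℤ) * s - j := (Int.natCast_dvd_natCast.mpr hD).trans h2
    have h4 := dvd_sub (Dvd.intro s rfl) h3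
    simpa using h4
  · rintro ⟨w, rfl⟩
    exact Subgroup.mem_zpowers_iff.mpr
      ⟨w, by rw [← zpow_natCast γ D, ← zpow_mul, hy]⟩

end GroupPart

/-- For `4 ∣ k` and `γ` a generator of `F*`: there exists nonzero `b` with
`Im(f_{b,θ²}) ⊆ Im(f_{a,θ})` iff `a ∈ ⟨γ^{(p^{2n}+1)/gcd(2,p−1)}⟩`, and in that
case there are exactly `p^{4n} − 1` such `b`. -/
theorem stmt_14 (p m l n k : ℕ) (hp : p.Prime) (hm : 0 < m) (hl : 0 < l)
    (hn : n = Nat.gcd l m) (hk : k = m / n) (hk4 : 4 ∣ k)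
    (F : Type) [Field F] [Fintype F] (hF : Fintype.card F = p ^ m)
    (γ : Fˣ) (hγ : ∀ u : Fˣ, u ∈ Subgroup.zpowers γ)
    (a : Fˣ) :
    ((∃ b : F, b ≠ 0 ∧
        Set.range (fun x : F => b * x ^ p ^ (2 * l) - x * b ^ p ^ (2 * l)) ⊆
          Set.range (fun x : F => (a : F) * x ^ p ^ l - x * (a : F) ^ p ^ l)) ↔
      a ∈ Subgroup.zpowers (γ ^ ((p ^ (2 * n) + 1) / Nat.gcd 2 (p - 1)))) ∧
    (a ∈ Subgroup.zpowers (γ ^ ((p ^ (2 * n) + 1) / Nat.gcd 2 (p - 1))) →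
      Nat.card {b : F // b ≠ 0 ∧
        Set.range (fun x : F => b * x ^ p ^ (2 * l) - x * b ^ p ^ (2 * l)) ⊆
          Set.range (fun x : F => (a : F) * x ^ p ^ l - x * (a : F) ^ p ^ l)}
        = p ^ (4 * n) - 1) := by
  have hp2 : 2 ≤ p := hp.two_le
  obtain ⟨hn0, hmk, hln, hco, hodd, hk0, hlk, h4nm, hg2, hg4'⟩ :=
    setup_facts l m n k hl hm hn hk hk4
  haveI : Fact p.Prime := ⟨hp⟩
  haveI : CharP F p := charP_of_card p m hp hm hF
  -- distinctness of Frobenius exponents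
  have hdist : ∀ i < k, ∀ j < k, (l * i) % m = (l * j) % m → i = j := by
    have half : ∀ i j : ℕ, i ≤ j → j < k → (l * i) % m = (l * j) % m → i = j := by
      intro i j hij hjk hmod
      have hme : l * i ≡ l * j [MOD m] := hmod
      have h1 : m ∣ l * j - l * i :=
        (Nat.modEq_iff_dvd' (Nat.mul_le_mul_left l hij)).mp hme
      have h2 : l * j - l * i = l * (j - i) := by
        rw [Nat.mul_sub]
      rw [h2, hln, hmk] at h1
      have h3 : n * k ∣ n * ((l / n) * (j - i)) := by
        have : n * (l / n) * (j - i) = n * ((l / n) * (j - i)) := by ring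
        rwa [this] at h1
      have h4 : k ∣ (l / n) * (j - i) := (Nat.mul_dvd_mul_iff_left hn0).mp h3
      have h5 : k ∣ j - i := (Nat.Coprime.symm hco).dvd_of_dvd_mul_left h4
      have h6 : j - i < k := by omega
      have h7 := Nat.eq_zero_of_dvd_of_lt h5 h6
      omega
    intro i hi j hj hmod
    rcases le_total i j with h | h
    · exact half i j h hj hmod
    · exact (half j i h hi hmod.symm).symm
  set l' := l / n with hl'
  -- cardinalities
  have hcard : Nat.card Fˣ = p ^ m - 1 := by
    rw [Nat.card_units, Nat.card_eq_fintype_card, hF]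
  have hordγ : orderOf γ = p ^ m - 1 :=
    (orderOf_eq_card_of_forall_mem_zpowers hγ).trans hcard
  have hpm2 : 2 ≤ p ^ m := by
    calc 2 = 2 ^ 1 := rfl
    _ ≤ p ^ m := Nat.pow_le_pow_left hp2 1 |>.trans (Nat.pow_le_pow_right (by omega) hm)
  have hN0 : 0 < p ^ m - 1 := by omega
  -- abbreviations (kept as plain terms)
  have hE : (p ^ (2 * l) + 1) * (p ^ (2 * l) - 1) = p ^ (4 * l) - 1 := by
    rw [sq_sub_one _ (Nat.one_le_pow _ _ (by omega)), ← pow_mul,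
      show 2 * l * 2 = 4 * l from by ring]
  have hgE : Nat.gcd ((p ^ (2 * l) + 1) * (p ^ (2 * l) - 1)) (p ^ m - 1) = p ^ (4 * n) - 1 := by
    rw [hE, gcd_pow_sub_one p hp2, hg4']
  obtain ⟨j, hj⟩ := Subgroup.mem_zpowers_iff.mp (hγ a)
  -- the per-b criterion
  have keyb : ∀ (b : F) (hb : b ≠ 0),
      (Set.range (fun x : F => b * x ^ p ^ (2 * l) - x * b ^ p ^ (2 * l)) ⊆
        Set.range (fun x : F => (a : F) * x ^ p ^ l - x * (a : F) ^ p ^ l)) ↔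
      (Units.mk0 b hb) ^ ((p ^ (2 * l) + 1) * (p ^ (2 * l) - 1))
        = a ^ ((p ^ l + 1) * (p ^ (2 * l) - 1)) := by
    intro b hb
    rw [incl_iff p m l k hF hm hp2 hk0 l' hlk hdist (a : F) b (Units.ne_zero a) hb]
    set U : Fˣ := (Units.mk0 b hb) ^ (p ^ (2 * l) + 1) * (a⁻¹) ^ (p ^ l + 1) with hU
    have hCU : b ^ (p ^ (2 * l) + 1) / (a : F) ^ (p ^ l + 1) = (U : F) := by
      rw [hU]
      push_cast
      rw [div_eq_mul_inv, Units.val_mk0, inv_pow]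
    rw [hCU]
    have hQ1 : 1 ≤ p ^ (2 * l) := Nat.one_le_pow _ _ (by omega)
    constructor
    · intro h
      have hUnit : U ^ p ^ (2 * l) = U := Units.ext (by push_cast; exact h)
      have h1 : U ^ (p ^ (2 * l) - 1) * U = U := by
        rw [← pow_succ, show p ^ (2 * l) - 1 + 1 = p ^ (2 * l) from by omega]
        exact hUnit
      have h2 : U ^ (p ^ (2 * l) - 1) = 1 := by
        have := mul_right_cancel (b := U) (h1.trans (one_mul U).symm)
        exact this
      have h3 : (Units.mk0 b hb) ^ ((p ^ (2 * l) + 1) * (p ^ (2 * l) - 1))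
          * (a ^ ((p ^ l + 1) * (p ^ (2 * l) - 1)))⁻¹ = 1 := by
        rw [← h2, hU, mul_pow, ← pow_mul, ← pow_mul, inv_pow]
      exact mul_inv_eq_one.mp h3
    · intro h
      have h2 : U ^ (p ^ (2 * l) - 1) = 1 := by
        rw [hU, mul_pow, ← pow_mul, ← pow_mul, inv_pow, h, mul_inv_cancel]
      have h1 : U ^ p ^ (2 * l) = U := by
        rw [show p ^ (2 * l) = (p ^ (2 * l) - 1) + 1 from by omega, pow_succ, h2, one_mul]
      have h3 := congrArg Units.val h1
      push_cast at h3
      exact h3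
  -- a^A = γ^(j*A)
  have haA : γ ^ (j * (((p ^ l + 1) * (p ^ (2 * l) - 1) : ℕ) : ℤ))
      = a ^ ((p ^ l + 1) * (p ^ (2 * l) - 1)) := by
    rw [zpow_mul, hj, zpow_natCast]
  -- existence chain
  have chain : (∃ u : Fˣ, u ^ ((p ^ (2 * l) + 1) * (p ^ (2 * l) - 1))
      = a ^ ((p ^ l + 1) * (p ^ (2 * l) - 1))) ↔
      a ∈ Subgroup.zpowers (γ ^ ((p ^ (2 * n) + 1) / Nat.gcd 2 (p - 1))) := by
    rw [exists_pow_eq γ hγ (p ^ m - 1) hordγ ((p ^ (2 * l) + 1) * (p ^ (2 * l) - 1))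
      (a ^ ((p ^ l + 1) * (p ^ (2 * l) - 1)))
      (j * (((p ^ l + 1) * (p ^ (2 * l) - 1) : ℕ) : ℤ)) haA, hgE,
      key_dvd_iff p l n l' hp2 hn0 hln hodd j]
    -- now : ↑D ∣ j ↔ membership
    have hDdvd : (p ^ (2 * n) + 1) / Nat.gcd 2 (p - 1) ∣ p ^ m - 1 := by
      have he : Nat.gcd 2 (p - 1) ∣ p ^ (2 * n) + 1 := by
        rw [← gcd_pow_add_one p n l l' hp2 hn0 hln hodd]
        exact Nat.gcd_dvd_left _ _
      refine (Nat.div_dvd_of_dvd he).trans ?_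
      have h1 : p ^ (2 * n) + 1 ∣ p ^ (4 * n) - 1 := by
        have := sq_sub_one (p ^ (2 * n)) (Nat.one_le_pow _ _ (by omega))
        rw [← pow_mul, show 2 * n * 2 = 4 * n from by ring] at this
        exact this ▸ Dvd.intro _ rfl
      exact h1.trans (pow_sub_one_dvd_pow_sub_one p (4 * n) m h4nm)
    exact (mem_zpowers_pow_iff' γ (p ^ m - 1) hordγ _ hDdvd a j hj).symm
  constructor
  · -- part 1
    rw [← chain]
    constructor
    · rintro ⟨b, hb, hincl⟩
      exact ⟨Units.mk0 b hb, (keyb b hb).mp hincl⟩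
    · rintro ⟨u, hu⟩
      refine ⟨(u : F), Units.ne_zero u, (keyb _ (Units.ne_zero u)).mpr ?_⟩
      rwa [Units.mk0_val]
  · -- part 2 : counting
    intro hmem
    have hex := chain.mpr hmem
    have ecard : {b : F // b ≠ 0 ∧
        Set.range (fun x : F => b * x ^ p ^ (2 * l) - x * b ^ p ^ (2 * l)) ⊆
          Set.range (fun x : F => (a : F) * x ^ p ^ l - x * (a : F) ^ p ^ l)} ≃
        {u : Fˣ // u ^ ((p ^ (2 * l) + 1) * (p ^ (2 * l) - 1))
          = a ^ ((p ^ l + 1) * (p ^ (2 * l) - 1))} :=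
      { toFun := fun x => ⟨Units.mk0 x.1 x.2.1, (keyb x.1 x.2.1).mp x.2.2⟩
        invFun := fun u => ⟨(u.1 : F), Units.ne_zero u.1,
          (keyb _ (Units.ne_zero u.1)).mpr (by rw [Units.mk0_val]; exact u.2)⟩
        left_inv := fun x => Subtype.ext rfl
        right_inv := fun u => Subtype.ext (Units.mk0_val u.1 (Units.ne_zero u.1)) }
    rw [Nat.card_congr ecard,
      card_solutions γ hγ (p ^ m - 1) hordγ hcard hN0 _ _ hex, hgE]
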